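/- Fix μ > 0, a = b = 7/2, and a positive integer K. Then as T → ∞ (T ∈ ℕ), the blocking probability is asymptotically equal to its lower bound: lim_{T→∞} P_b(K,T)·(T+1)·(1−λ)² / P_K(T+1) = 1, where λ = μ/(μ + b). Equivalently, the ratio of the paper's lower bound P_K(T+1)/((T+1)(1−λ)²) to its upper bound P_K(T+1)/((T+1)(1 − (T+1)(T+K·a+1)λ/(T+2)²)²) tends to 1. -/

import Mathlib

open scoped BigOperators

/-- The distribution of the number of users in the coverage of a cluster of `K` RRUs:
`P_K(n) = b^{Ka} μ^n Γ(n + Ka) / ((μ + b)^{Ka+n} Γ(Ka) n!)` with `a = b = 7/2`. -/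
noncomputable def Puser (μ : ℝ) (K : ℕ) (n : ℕ) : ℝ :=
  (7/2 : ℝ) ^ ((K : ℝ) * (7/2)) * μ ^ n * Real.Gamma ((n : ℝ) + (K : ℝ) * (7/2)) /
    ((μ + 7/2) ^ ((K : ℝ) * (7/2) + (n : ℝ)) * Real.Gamma ((K : ℝ) * (7/2)) *
      (n.factorial : ℝ))

/-- The `n`-th summand of the user blocking probability: `((n − T)/n)·P_K(n)` for
`n ≥ T + 1`, and `0` otherwise. -/
noncomputable def blockTerm (μ : ℝ) (K T : ℕ) (n : ℕ) : ℝ :=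
  if T + 1 ≤ n then (((n : ℝ) - (T : ℝ)) / (n : ℝ)) * Puser μ K n else 0

/-- The user blocking probability `P_b(K,T) = Σ_{n=T+1}^∞ ((n − T)/n)·P_K(n)`. -/
noncomputable def Pblock (μ : ℝ) (K T : ℕ) : ℝ := ∑' n : ℕ, blockTerm μ K T n

open Filter

namespace PblockAux

lemma Puser_pos {μ : ℝ} (hμ : 0 < μ) {K : ℕ} (hK : 0 < K) (n : ℕ) : 0 < Puser μ K n := by
  have hKc : (0:ℝ) < (K:ℝ) := by exact_mod_cast hK
  have hα : 0 < (K:ℝ) * (7/2) := by positivity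
  have h1 : 0 < (7/2:ℝ) ^ ((K:ℝ)*(7/2)) := Real.rpow_pos_of_pos (by norm_num) _
  have h3 : 0 < Real.Gamma ((n:ℝ) + (K:ℝ)*(7/2)) := Real.Gamma_pos_of_pos (by positivity)
  have h4 : 0 < (μ + 7/2) ^ ((K:ℝ)*(7/2) + (n:ℝ)) := Real.rpow_pos_of_pos (by linarith) _
  have h5 : 0 < Real.Gamma ((K:ℝ)*(7/2)) := Real.Gamma_pos_of_pos hα
  have h6 : (0:ℝ) < n.factorial := by exact_mod_cast n.factorial_pos
  exact div_pos (by positivity) (by positivity)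

lemma Puser_succ {μ : ℝ} (hμ : 0 < μ) {K : ℕ} (hK : 0 < K) (n : ℕ) :
    Puser μ K (n+1) = (μ/(μ+7/2)) * (((n:ℝ) + (K:ℝ)*(7/2))/((n:ℝ)+1)) * Puser μ K n := by
  have hKc : (0:ℝ) < (K:ℝ) := by exact_mod_cast hK
  have hα : 0 < (K:ℝ) * (7/2) := by positivity
  have hμb : (0:ℝ) < μ + 7/2 := by linarith
  have hne : ((n:ℝ) + (K:ℝ)*(7/2)) ≠ 0 := by positivity
  have hG : Real.Gamma ((K:ℝ)*(7/2)) ≠ 0 := ne_of_gt (Real.Gamma_pos_of_pos hα)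
  have hrp : (μ+7/2) ^ ((K:ℝ)*(7/2) + (n:ℝ)) ≠ 0 := ne_of_gt (Real.rpow_pos_of_pos hμb _)
  have hfac : ((n.factorial : ℕ):ℝ) ≠ 0 := by exact_mod_cast n.factorial_pos.ne'
  have hn1 : ((n:ℝ)+1) ≠ 0 := by positivity
  unfold Puser
  push_cast [Nat.factorial_succ]
  rw [show (n:ℝ) + 1 + (K:ℝ)*(7/2) = ((n:ℝ) + (K:ℝ)*(7/2)) + 1 by ring,
    Real.Gamma_add_one hne,
    show (K:ℝ)*(7/2) + ((n:ℝ)+1) = ((K:ℝ)*(7/2) + (n:ℝ)) + 1 by ring,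
    Real.rpow_add_one (ne_of_gt hμb), pow_succ]
  field_simp

/-- Product of the ratios of consecutive `Puser` values, with `l` standing for
`μ/(μ+7/2)` and `α` for `K·(7/2)`. -/
noncomputable def Fprod (l α : ℝ) (T m : ℕ) : ℝ :=
  ∏ j ∈ Finset.range m, (l * (((T:ℝ) + (1+(j:ℝ)+α))/((T:ℝ) + (2+(j:ℝ)))))

lemma Puser_shift {μ : ℝ} (hμ : 0 < μ) {K : ℕ} (hK : 0 < K) (T m : ℕ) :
    Puser μ K (T+1+m) = Puser μ K (T+1) * Fprod (μ/(μ+7/2)) ((K:ℝ)*(7/2)) T m := by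
  induction m with
  | zero => simp [Fprod]
  | succ m ih =>
    have h := Puser_succ hμ hK (T+1+m)
    rw [show T+1+(m+1) = (T+1+m)+1 by ring, h, ih]
    unfold Fprod
    rw [Finset.prod_range_succ]
    push_cast
    ring

lemma tendsto_ratio (c d : ℝ) (hd : 0 < d) :
    Tendsto (fun T : ℕ => ((T:ℝ)+c)/((T:ℝ)+d)) atTop (nhds 1) := by
  have h0 : Tendsto (fun T:ℕ => ((T:ℝ)+d)) atTop atTop :=
    tendsto_atTop_add_const_right _ d tendsto_natCast_atTop_atTop
  have h1 : Tendsto (fun T:ℕ => (c-d)/((T:ℝ)+d)) atTop (nhds 0) :=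
    Tendsto.div_atTop tendsto_const_nhds h0
  have h2 : Tendsto (fun T:ℕ => 1 + (c-d)/((T:ℝ)+d)) atTop (nhds 1) := by
    simpa using tendsto_const_nhds.add h1
  refine h2.congr (fun T => ?_)
  have hTd : ((T:ℝ)+d) ≠ 0 := by positivity
  field_simp
  ring

/-- The rescaled summand. -/
noncomputable def gfun (l α : ℝ) (T m : ℕ) : ℝ :=
  (1 - l)^2 * ((m:ℝ)+1) * (((T:ℝ)+1)/((T:ℝ)+1+(m:ℝ))) * Fprod l α T m

/-- Uniform bound for `gfun`. -/
noncomputable def boundfun (l α : ℝ) (m : ℕ) : ℝ :=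
  (1 - l)^2 * ((m:ℝ)+1) * ∏ j ∈ Finset.range m, (l * ((1+(j:ℝ)+α)/(2+(j:ℝ))))

variable {l α : ℝ}

lemma Fprod_pos (h0 : 0 < l) (hα : 0 < α) (T m : ℕ) : 0 < Fprod l α T m := by
  refine Finset.prod_pos (fun j _ => ?_)
  have hT : (0:ℝ) ≤ (T:ℝ) := Nat.cast_nonneg T
  have hj : (0:ℝ) ≤ (j:ℝ) := Nat.cast_nonneg j
  positivity

lemma Bprod_pos (h0 : 0 < l) (hα : 0 < α) (m : ℕ) :
    0 < ∏ j ∈ Finset.range m, (l * ((1+(j:ℝ)+α)/(2+(j:ℝ)))) := by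
  refine Finset.prod_pos (fun j _ => ?_)
  have hj : (0:ℝ) ≤ (j:ℝ) := Nat.cast_nonneg j
  positivity

lemma boundfun_pos (h0 : 0 < l) (h1 : l < 1) (hα : 0 < α) (m : ℕ) : 0 < boundfun l α m := by
  have := Bprod_pos h0 hα m
  have h2 : (0:ℝ) < 1 - l := by linarith
  have h3 : (0:ℝ) < (m:ℝ)+1 := by positivity
  unfold boundfun
  positivity

lemma gfun_pos (h0 : 0 < l) (h1 : l < 1) (hα : 0 < α) (T m : ℕ) : 0 < gfun l α T m := by
  have := Fprod_pos h0 hα T m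
  have h2 : (0:ℝ) < 1 - l := by linarith
  have h3 : (0:ℝ) < (m:ℝ)+1 := by positivity
  have h4 : (0:ℝ) < ((T:ℝ)+1) := by positivity
  have h5 : (0:ℝ) < ((T:ℝ)+1+(m:ℝ)) := by positivity
  unfold gfun
  positivity

lemma gfun_le (h0 : 0 < l) (h1 : l < 1) (hα : 1 ≤ α) (T m : ℕ) :
    ‖gfun l α T m‖ ≤ boundfun l α m := by
  have hα0 : 0 < α := by linarith
  rw [Real.norm_of_nonneg (gfun_pos h0 h1 hα0 T m).le]
  unfold gfun boundfun
  have h2 : (0:ℝ) < 1 - l := by linarith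
  have hT1 : ((T:ℝ)+1)/((T:ℝ)+1+(m:ℝ)) ≤ 1 := by
    rw [div_le_one (by positivity)]
    have : (0:ℝ) ≤ (m:ℝ) := Nat.cast_nonneg m
    linarith
  have hF : Fprod l α T m ≤ ∏ j ∈ Finset.range m, (l * ((1+(j:ℝ)+α)/(2+(j:ℝ)))) := by
    unfold Fprod
    refine Finset.prod_le_prod (fun j _ => ?_) (fun j _ => ?_)
    · have hT : (0:ℝ) ≤ (T:ℝ) := Nat.cast_nonneg T
      have hj : (0:ℝ) ≤ (j:ℝ) := Nat.cast_nonneg j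
      positivity
    · refine mul_le_mul_of_nonneg_left ?_ h0.le
      rw [div_le_div_iff₀ (by positivity) (by positivity)]
      have hT : (0:ℝ) ≤ (T:ℝ) := Nat.cast_nonneg T
      have hj : (0:ℝ) ≤ (j:ℝ) := Nat.cast_nonneg j
      nlinarith
  calc (1-l)^2 * ((m:ℝ)+1) * (((T:ℝ)+1)/((T:ℝ)+1+(m:ℝ))) * Fprod l α T m
      ≤ (1-l)^2 * ((m:ℝ)+1) * 1 * Fprod l α T m :=
        mul_le_mul_of_nonneg_right (mul_le_mul_of_nonneg_left hT1 (by positivity))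
          (Fprod_pos h0 hα0 T m).le
    _ ≤ (1-l)^2 * ((m:ℝ)+1) * ∏ j ∈ Finset.range m, (l * ((1+(j:ℝ)+α)/(2+(j:ℝ)))) := by
        rw [mul_one]
        exact mul_le_mul_of_nonneg_left hF (by positivity)

lemma boundfun_succ (m : ℕ) :
    boundfun l α (m+1) = boundfun l α m * (l * (((m:ℝ)+(1+α))/((m:ℝ)+1))) := by
  unfold boundfun
  rw [Finset.prod_range_succ]
  have h1 : ((m:ℝ)+1) ≠ 0 := by positivity
  have h2 : ((2:ℝ)+(m:ℝ)) ≠ 0 := by positivity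
  push_cast
  field_simp
  ring

lemma boundfun_summable (h0 : 0 < l) (h1 : l < 1) (hα : 0 < α) :
    Summable (boundfun l α) := by
  refine summable_of_ratio_test_tendsto_lt_one h1
    (Eventually.of_forall fun m => (boundfun_pos h0 h1 hα m).ne') ?_
  have hr : Tendsto (fun m : ℕ => l * (((m:ℝ)+(1+α))/((m:ℝ)+1))) atTop (nhds l) := by
    have := (tendsto_ratio (1+α) 1 one_pos).const_mul l
    simpa using this
  refine hr.congr (fun m => ?_)
  rw [Real.norm_of_nonneg (boundfun_pos h0 h1 hα (m+1)).le,
    Real.norm_of_nonneg (boundfun_pos h0 h1 hα m).le, boundfun_succ,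
    mul_div_cancel_left₀ _ (boundfun_pos h0 h1 hα m).ne']

lemma gfun_tendsto (h0 : 0 < l) (h1 : l < 1) (hα : 0 < α) (m : ℕ) :
    Tendsto (fun T : ℕ => gfun l α T m) atTop (nhds ((1-l)^2 * ((m:ℝ)+1) * l^m)) := by
  have hr1 : Tendsto (fun T : ℕ => ((T:ℝ)+1)/((T:ℝ)+1+(m:ℝ))) atTop (nhds 1) := by
    have := tendsto_ratio 1 (1+(m:ℝ)) (by positivity)
    refine this.congr (fun T => ?_)
    ring_nf
  have hr2 : Tendsto (fun T : ℕ => Fprod l α T m) atTop (nhds (l^m)) := by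
    have hp := tendsto_finset_prod (x := atTop)
      (f := fun (j : ℕ) (T : ℕ) => (l * (((T:ℝ) + (1+(j:ℝ)+α))/((T:ℝ) + (2+(j:ℝ))))))
      (a := fun _ => l) (Finset.range m)
      (fun j _ => by
        have hj : (0:ℝ) < 2+(j:ℝ) := by positivity
        have := (tendsto_ratio (1+(j:ℝ)+α) (2+(j:ℝ)) hj).const_mul l
        simpa using this)
    simpa [Fprod] using hp
  have := (hr1.const_mul ((1-l)^2 * ((m:ℝ)+1))).mul hr2
  rw [mul_one] at this
  refine this.congr (fun T => ?_)
  unfold gfun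
  ring

lemma hasSum_limit (h0 : 0 < l) (h1 : l < 1) :
    HasSum (fun m : ℕ => (1-l)^2 * ((m:ℝ)+1) * l^m) 1 := by
  have h2 : (0:ℝ) < 1 - l := by linarith
  have hnorm : ‖l‖ < 1 := by rw [Real.norm_eq_abs, abs_of_pos h0]; exact h1
  have hs1 : HasSum (fun m : ℕ => (m:ℝ) * l^m) (l/(1-l)^2) :=
    hasSum_coe_mul_geometric_of_norm_lt_one hnorm
  have hs2 : HasSum (fun m : ℕ => l^m) (1/(1-l)) := by
    simpa [one_div] using hasSum_geometric_of_lt_one h0.le h1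
  have hs3 := (hs1.add hs2).mul_left ((1-l)^2)
  have hval : (1-l)^2 * (l/(1-l)^2 + 1/(1-l)) = 1 := by
    field_simp
    ring
  rw [hval] at hs3
  exact hs3.congr_fun (fun m => by ring)

end PblockAux

open Filter PblockAux

/-- as `T → ∞`, the blocking probability is asymptotically equal to its
lower bound: `P_b(K,T)·(T+1)·(1−λ)² / P_K(T+1) → 1` with `λ = μ/(μ+b)`. -/
theorem Pblock_asymptotic_lower_bound (μ : ℝ) (hμ : 0 < μ) (K : ℕ) (hK : 0 < K) :
    Filter.Tendsto
      (fun T : ℕ =>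
        Pblock μ K T * ((T : ℝ) + 1) * (1 - μ / (μ + 7/2)) ^ 2 / Puser μ K (T + 1))
      Filter.atTop (nhds 1) := by
  have hμb : (0:ℝ) < μ + 7/2 := by linarith
  have hl0 : 0 < μ/(μ+7/2) := div_pos hμ hμb
  have hl1 : μ/(μ+7/2) < 1 := (div_lt_one hμb).mpr (by linarith)
  have hKc : (1:ℝ) ≤ (K:ℝ) := by exact_mod_cast hK
  have hα1 : (1:ℝ) ≤ (K:ℝ)*(7/2) := by nlinarith
  have hα0 : (0:ℝ) < (K:ℝ)*(7/2) := by linarith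
  -- dominated convergence for the rescaled sums
  have hmain : Tendsto (fun T : ℕ => ∑' m : ℕ, gfun (μ/(μ+7/2)) ((K:ℝ)*(7/2)) T m)
      atTop (nhds 1) := by
    have h := tendsto_tsum_of_dominated_convergence
      (f := fun (T m : ℕ) => gfun (μ/(μ+7/2)) ((K:ℝ)*(7/2)) T m)
      (g := fun m : ℕ => (1-μ/(μ+7/2))^2 * ((m:ℝ)+1) * (μ/(μ+7/2))^m)
      (boundfun_summable hl0 hl1 hα0)
      (gfun_tendsto hl0 hl1 hα0)
      (Eventually.of_forall fun T m => gfun_le hl0 hl1 hα1 T m)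
    rwa [(hasSum_limit hl0 hl1).tsum_eq] at h
  refine hmain.congr (fun T => ?_)
  have hPpos := Puser_pos hμ hK (T+1)
  have hPne : Puser μ K (T+1) ≠ 0 := hPpos.ne'
  have h1l : (1:ℝ) - μ/(μ+7/2) ≠ 0 := by
    have : (0:ℝ) < 1 - μ/(μ+7/2) := by linarith
    exact this.ne'
  have hbt : ∀ m : ℕ, blockTerm μ K T (m + (T+1))
      = gfun (μ/(μ+7/2)) ((K:ℝ)*(7/2)) T m *
        (Puser μ K (T+1) / (((T:ℝ)+1)*(1-μ/(μ+7/2))^2)) := by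
    intro m
    have hle : T + 1 ≤ m + (T+1) := Nat.le_add_left _ _
    rw [blockTerm, if_pos hle, show m + (T+1) = T+1+m by ring, Puser_shift hμ hK]
    unfold gfun
    have h3 : ((T:ℝ)+1+(m:ℝ)) ≠ 0 := by positivity
    have h4 : ((T:ℝ)+1) ≠ 0 := by positivity
    push_cast
    generalize Puser μ K (T+1) = P
    generalize Fprod (μ/(μ+7/2)) ((K:ℝ)*(7/2)) T m = F
    generalize hg : μ/(μ+7/2) = l at h1l ⊢
    field_simp
    ring
  have hsumg : Summable (fun m => gfun (μ/(μ+7/2)) ((K:ℝ)*(7/2)) T m) :=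
    Summable.of_norm_bounded (boundfun_summable hl0 hl1 hα0)
      (fun m => gfun_le hl0 hl1 hα1 T m)
  have hsumbt' : Summable (fun m => blockTerm μ K T (m + (T+1))) :=
    (hsumg.mul_right _).congr (fun m => (hbt m).symm)
  have hsumbt : Summable (blockTerm μ K T) := (summable_nat_add_iff (T+1)).mp hsumbt'
  have htsum : Pblock μ K T = ∑' m : ℕ, blockTerm μ K T (m + (T+1)) := by
    rw [Pblock, ← hsumbt.sum_add_tsum_nat_add (T+1)]
    have hz : ∑ i ∈ Finset.range (T+1), blockTerm μ K T i = 0 := by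
      refine Finset.sum_eq_zero (fun i hi => ?_)
      rw [blockTerm, if_neg]
      exact Nat.not_le.mpr (Finset.mem_range.mp hi)
    rw [hz, zero_add]
  have hcc : ∀ m : ℕ, gfun (μ/(μ+7/2)) ((K:ℝ)*(7/2)) T m
      = blockTerm μ K T (m + (T+1)) * ((((T:ℝ)+1)*(1-μ/(μ+7/2))^2) / Puser μ K (T+1)) := by
    intro m
    rw [hbt m]
    have h4 : ((T:ℝ)+1) ≠ 0 := by positivity
    rw [mul_assoc, div_mul_div_comm,
      mul_comm (Puser μ K (T+1)), div_self (by exact mul_ne_zero (mul_ne_zero h4 (pow_ne_zero 2 h1l)) hPne), mul_one]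
  calc ∑' m : ℕ, gfun (μ/(μ+7/2)) ((K:ℝ)*(7/2)) T m
      = ∑' m : ℕ, (blockTerm μ K T (m + (T+1)) *
          ((((T:ℝ)+1)*(1-μ/(μ+7/2))^2) / Puser μ K (T+1))) := tsum_congr hcc
    _ = (∑' m : ℕ, blockTerm μ K T (m + (T+1))) *
          ((((T:ℝ)+1)*(1-μ/(μ+7/2))^2) / Puser μ K (T+1)) := tsum_mul_right
    _ = Pblock μ K T * ((T:ℝ)+1) * (1-μ/(μ+7/2))^2 / Puser μ K (T+1) := by
        rw [← htsum]; ring
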